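/- In the syntactic synchronous algebra of a relation R, the syntactic congruence of the accepting set coincides with the dependency relation. -/

import Mathlib

/-- Letter-types: `l` for a pair of proper letters, `p` for (letter, padding),
`q` for (padding, letter). -/
inductive LTy | l | p | q
deriving DecidableEq

/-- The five types of (well-formed) synchronous words:
`ll`, `ll→lb` (= `lllb`), `lb`, `ll→bl` (= `llbl`), `bl`. -/
inductive STy | ll | lllb | lb | llbl | bl
deriving DecidableEq

namespace STy

/-- Letter-type of the first letter. -/
def src : STy → LTy
  | ll => .l | lllb => .l | lb => .p | llbl => .l | bl => .q

/-- Letter-type of the last letter. -/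
def tgt : STy → LTy
  | ll => .l | lllb => .p | lb => .p | llbl => .q | bl => .q

/-- `σ = α→β` is compatible with `τ = β'→γ` iff `β = β'` or `β = ll`. -/
def compat (σ τ : STy) : Prop := σ.tgt = τ.src ∨ σ.tgt = LTy.l

/-- Product of compatible types (junk on incompatible pairs). -/
def comp : STy → STy → STy
  | ll, ll => ll
  | ll, lllb => lllb
  | ll, lb => lllb
  | ll, llbl => llbl
  | ll, bl => llbl
  | lllb, _ => lllb
  | lb, _ => lb
  | llbl, _ => llbl
  | bl, _ => bl

end STy

/-- A synchronous algebra: a `STy`-typed set with a dependency relation and a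
partial associative product defined exactly on compatible pairs, monotone with
respect to dependency, with units.  The partial product is modelled as an
`Option`-valued total product. -/
structure SyncAlg where
  A : Type
  ty : A → STy
  dep : A → A → Prop
  mul : A → A → Option A
  dep_refl : ∀ x, dep x x
  dep_symm : ∀ {x y}, dep x y → dep y x
  dep_eq : ∀ {x y}, dep x y → ty x = ty y → x = y
  mul_defined : ∀ x y, (mul x y).isSome ↔ (ty x).compat (ty y)
  ty_mul : ∀ {x y z}, mul x y = some z → ty z = (ty x).comp (ty y)
  mul_assoc : ∀ x y z,
    (mul x y).bind (fun a => mul a z) = (mul y z).bind (fun b => mul x b)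
  dep_mul_left : ∀ {x x' y z z'}, dep x x' →
    mul x y = some z → mul x' y = some z' → dep z z'
  dep_mul_right : ∀ {x x' y z z'}, dep x x' →
    mul y x = some z → mul y x' = some z' → dep z z'
  unit : STy → A
  ty_unit : ∀ τ, ty (unit τ) = τ
  unit_mul : ∀ {τ x z}, mul (unit τ) x = some z → dep z x
  mul_unit : ∀ {τ x z}, mul x (unit τ) = some z → dep z x
  unit_lllb : mul (unit .ll) (unit .lb) = some (unit .lllb)
  unit_llbl : mul (unit .ll) (unit .bl) = some (unit .llbl)

namespace SyncAlg

/-- A closed subset of a synchronous algebra: saturated under dependency. -/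
def Closed (S : SyncAlg) (C : Set S.A) : Prop :=
  ∀ {x y : S.A}, S.dep x y → (x ∈ C ↔ y ∈ C)

/-- Two-sided partial product `x·a·y`. -/
def mul3 (S : SyncAlg) (x a y : S.A) : Option S.A :=
  (S.mul x a).bind fun u => S.mul u y

/-- The syntactic congruence of a subset `C` of a synchronous algebra. -/
def synCong (S : SyncAlg) (C : Set S.A) (a b : S.A) : Prop :=
  (∀ x y u v, S.mul3 x a y = some u → S.mul3 x b y = some v → (u ∈ C ↔ v ∈ C)) ∧
  (∀ x u v, S.mul x a = some u → S.mul x b = some v → (u ∈ C ↔ v ∈ C)) ∧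
  (∀ y u v, S.mul a y = some u → S.mul b y = some v → (u ∈ C ↔ v ∈ C))

/-- Left residual `x⁻¹C` of a closed subset `C` by an element `x`. -/
def lres (S : SyncAlg) (x : S.A) (C : Set S.A) : Set S.A :=
  { y | ∃ y' u, S.synCong C y' y ∧ S.mul x y' = some u ∧ u ∈ C }

/-- Right residual `C·x⁻¹` of a closed subset `C` by an element `x`. -/
def rres (S : SyncAlg) (x : S.A) (C : Set S.A) : Set S.A :=
  { y | ∃ y' u, S.synCong C y' y ∧ S.mul y' x = some u ∧ u ∈ C }

end SyncAlg

/-- Morphisms of synchronous algebras: preserve types, units, product and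
dependency. -/
structure SyncHom (S T : SyncAlg) where
  toFun : S.A → T.A
  map_ty : ∀ x, T.ty (toFun x) = S.ty x
  map_unit : ∀ τ, toFun (S.unit τ) = T.unit τ
  map_mul : ∀ {x y z}, S.mul x y = some z →
    T.mul (toFun x) (toFun y) = some (toFun z)
  map_dep : ∀ {x y}, S.dep x y → T.dep (toFun x) (toFun y)
/-- Synchronous words over an alphabet `α`, organized by their five types. -/
inductive SyncW (α : Type) : Type
  | wll : List (α × α) → SyncW α
  | wlllb : List (α × α) → List α → SyncW α
  | wlb : List α → SyncW α
  | wllbl : List (α × α) → List α → SyncW α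
  | wbl : List α → SyncW α

namespace SyncW

variable {α : Type}

/-- The type of a synchronous word. -/
def ty : SyncW α → STy
  | wll _ => .ll | wlllb _ _ => .lllb | wlb _ => .lb | wllbl _ _ => .llbl | wbl _ => .bl

/-- Base identifications of the dependency relation on synchronous words. -/
inductive dep0 : SyncW α → SyncW α → Prop
  | ll_lllb (w : List (α × α)) : dep0 (wll w) (wlllb w [])
  | ll_llbl (w : List (α × α)) : dep0 (wll w) (wllbl w [])
  | lb_lllb (s : List α) : dep0 (wlb s) (wlllb [] s)
  | bl_llbl (s : List α) : dep0 (wbl s) (wllbl [] s)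

/-- The dependency relation: reflexive-symmetric closure of `dep0`. -/
def dep (x y : SyncW α) : Prop := x = y ∨ dep0 x y ∨ dep0 y x

/-- Concatenation of synchronous words (partial). -/
def mul : SyncW α → SyncW α → Option (SyncW α)
  | wll w, wll w' => some (wll (w ++ w'))
  | wll w, wlllb w' s => some (wlllb (w ++ w') s)
  | wll w, wlb s => some (wlllb w s)
  | wll w, wllbl w' s => some (wllbl (w ++ w') s)
  | wll w, wbl s => some (wllbl w s)
  | wlllb w s, wlb s' => some (wlllb w (s ++ s'))
  | wlb s, wlb s' => some (wlb (s ++ s'))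
  | wllbl w s, wbl s' => some (wllbl w (s ++ s'))
  | wbl s, wbl s' => some (wbl (s ++ s'))
  | _, _ => none

/-- Decoding into the pair of words represented. -/
def decode : SyncW α → List α × List α
  | wll w => (w.map Prod.fst, w.map Prod.snd)
  | wlllb w s => (w.map Prod.fst ++ s, w.map Prod.snd)
  | wlb s => (s, [])
  | wllbl w s => (w.map Prod.fst, w.map Prod.snd ++ s)
  | wbl s => ([], s)

end SyncW

set_option maxHeartbeats 2000000 in
/-- The free synchronous algebra `Sync(α)` of synchronous words over `α`. -/
def freeSync (α : Type) : SyncAlg where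
  A := SyncW α
  ty := SyncW.ty
  dep := SyncW.dep
  mul := SyncW.mul
  dep_refl x := Or.inl rfl
  dep_symm h := by
    rcases h with rfl | h | h
    · exact Or.inl rfl
    · exact Or.inr (Or.inr h)
    · exact Or.inr (Or.inl h)
  dep_eq := by
    rintro x y (rfl | h | h) hty <;> first
      | rfl
      | (cases h <;> simp [SyncW.ty] at hty)
  mul_defined x y := by
    cases x <;> cases y <;>
      simp [SyncW.mul, SyncW.ty, STy.compat, STy.tgt, STy.src]
  ty_mul := by
    intro x y z h
    cases x <;> cases y <;>
      simp [SyncW.mul] at h <;> subst h <;> rfl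
  mul_assoc x y z := by
    cases x <;> cases y <;> cases z <;>
      simp [SyncW.mul, List.append_assoc]
  dep_mul_left := by
    intro x x' y z z' h h1 h2
    rcases h with rfl | h | h
    · rw [h1] at h2; injection h2 with h2; rw [h2]; exact Or.inl rfl
    · cases h <;> cases y <;>
        simp [SyncW.mul] at h1 h2 <;> subst h1 <;> subst h2 <;>
        first
          | exact Or.inl rfl
          | exact Or.inr (Or.inl (by constructor))
          | exact Or.inr (Or.inr (by constructor))
    · cases h <;> cases y <;>
        simp [SyncW.mul] at h1 h2 <;> subst h1 <;> subst h2 <;>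
        first
          | exact Or.inl rfl
          | exact Or.inr (Or.inl (by constructor))
          | exact Or.inr (Or.inr (by constructor))
  dep_mul_right := by
    intro x x' y z z' h h1 h2
    rcases h with rfl | h | h
    · rw [h1] at h2; injection h2 with h2; rw [h2]; exact Or.inl rfl
    · cases h <;> cases y <;>
        simp [SyncW.mul] at h1 h2 <;> subst h1 <;> subst h2 <;>
        first
          | exact Or.inl rfl
          | exact Or.inr (Or.inl (by constructor))
          | exact Or.inr (Or.inr (by constructor))
    · cases h <;> cases y <;>
        simp [SyncW.mul] at h1 h2 <;> subst h1 <;> subst h2 <;>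
        first
          | exact Or.inl rfl
          | exact Or.inr (Or.inl (by constructor))
          | exact Or.inr (Or.inr (by constructor))
  unit := fun τ => match τ with
    | .ll => .wll []
    | .lllb => .wlllb [] []
    | .lb => .wlb []
    | .llbl => .wllbl [] []
    | .bl => .wbl []
  ty_unit τ := by cases τ <;> rfl
  unit_mul := by
    intro τ x z h
    cases τ <;> cases x <;> simp [SyncW.mul] at h <;> subst h <;>
      first
        | exact Or.inl rfl
        | exact Or.inr (Or.inl (by constructor))
        | exact Or.inr (Or.inr (by constructor))
  mul_unit := by
    intro τ x z h
    cases τ <;> cases x <;> simp [SyncW.mul] at h <;> subst h <;>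
      first
        | exact Or.inl rfl
        | exact Or.inr (Or.inl (by constructor))
        | exact Or.inr (Or.inr (by constructor))
  unit_lllb := rfl
  unit_llbl := rfl

/-- The closed subset of `Sync(α)` induced by a relation `R ⊆ α* × α*`. -/
def projS {α : Type} (R : Set (List α × List α)) : Set (SyncW α) :=
  { x | x.decode ∈ R }

/-- `⟨φ, B, Acc⟩` recognizes the relation `R` when `Acc` is closed and
`proj R = φ⁻¹[Acc]`. -/
def RecognizesRel {α : Type} (B : SyncAlg) (φ : SyncHom (freeSync α) B)
    (Acc : Set B.A) (R : Set (List α × List α)) : Prop :=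
  B.Closed Acc ∧ projS R = φ.toFun ⁻¹' Acc

/-! ### Auxiliary lemmas -/

namespace STy

lemma tgt_comp {σ τ : STy} (h : σ.compat τ) : (σ.comp τ).tgt = τ.tgt := by
  cases σ <;> cases τ <;>
    first
      | rfl
      | (exfalso; rcases h with h | h <;> simp [STy.tgt, STy.src] at h)

end STy

namespace SyncAlg

variable {S : SyncAlg} {C : Set S.A}

lemma compat_of_mul {x y z : S.A} (h : S.mul x y = some z) :
    (S.ty x).compat (S.ty y) :=
  (S.mul_defined x y).1 (by rw [h]; rfl)

lemma mul_isSome_right {x y c : S.A} (hty : S.ty x = S.ty y)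
    (h : (S.mul c x).isSome) : (S.mul c y).isSome :=
  (S.mul_defined c y).2 (hty ▸ (S.mul_defined c x).1 h)

lemma mul_isSome_left {x y c : S.A} (hty : S.ty x = S.ty y)
    (h : (S.mul x c).isSome) : (S.mul y c).isSome := by
  refine (S.mul_defined y c).2 ?_
  have := (S.mul_defined x c).1 h
  rwa [hty] at this

lemma isSome_of_eq_some {o : Option S.A} {z : S.A} (h : o = some z) : o.isSome := by
  rw [h]; rfl

lemma mul3_some {x a y u : S.A} (h : S.mul3 x a y = some u) :
    ∃ w, S.mul x a = some w ∧ S.mul w y = some u := by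
  unfold mul3 at h
  cases hx : S.mul x a with
  | none => rw [hx] at h; simp at h
  | some w => rw [hx] at h; exact ⟨w, rfl, h⟩

lemma mul3_mk {x a y w u : S.A} (h1 : S.mul x a = some w) (h2 : S.mul w y = some u) :
    S.mul3 x a y = some u := by
  unfold mul3; rw [h1]; exact h2

lemma synCong_refl (a : S.A) : S.synCong C a a := by
  refine ⟨?_, ?_, ?_⟩
  · intro x y u v hu hv
    rw [hu] at hv; injection hv with hv; rw [hv]
  · intro x u v hu hv
    rw [hu] at hv; injection hv with hv; rw [hv]
  · intro y u v hu hv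
    rw [hu] at hv; injection hv with hv; rw [hv]

lemma synCong_symm {a b : S.A} (h : S.synCong C a b) : S.synCong C b a :=
  ⟨fun x y u v hu hv => (h.1 x y v u hv hu).symm,
   fun x u v hu hv => (h.2.1 x v u hv hu).symm,
   fun y u v hu hv => (h.2.2 y v u hv hu).symm⟩

lemma synCong_of_dep (hC : S.Closed C) {a b : S.A} (h : S.dep a b) :
    S.synCong C a b := by
  refine ⟨?_, ?_, ?_⟩
  · intro x y u v hu hv
    obtain ⟨u1, hxa, hud⟩ := mul3_some hu
    obtain ⟨v1, hxb, hvd⟩ := mul3_some hv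
    exact hC (S.dep_mul_left (S.dep_mul_right h hxa hxb) hud hvd)
  · intro x u v hu hv
    exact hC (S.dep_mul_right h hu hv)
  · intro y u v hu hv
    exact hC (S.dep_mul_left h hu hv)

lemma mem_iff_of_synCong (hC : S.Closed C) {a b : S.A} (h : S.synCong C a b) :
    (a ∈ C ↔ b ∈ C) := by
  have ha : (S.mul (S.unit .ll) a).isSome := by
    refine (S.mul_defined _ _).2 (Or.inr ?_)
    rw [S.ty_unit]; rfl
  have hb : (S.mul (S.unit .ll) b).isSome := by
    refine (S.mul_defined _ _).2 (Or.inr ?_)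
    rw [S.ty_unit]; rfl
  obtain ⟨z, hz⟩ := Option.isSome_iff_exists.mp ha
  obtain ⟨z', hz'⟩ := Option.isSome_iff_exists.mp hb
  have hiff := h.2.1 _ _ _ hz hz'
  rw [hC (S.unit_mul hz), hC (S.unit_mul hz')] at hiff
  exact hiff

/-- Transitivity of the syntactic congruence when the first two elements have
the same type. -/
lemma synCong_trans_left {x y z : S.A} (hxy : S.ty x = S.ty y)
    (h1 : S.synCong C x y) (h2 : S.synCong C y z) : S.synCong C x z := by
  refine ⟨?_, ?_, ?_⟩
  · intro c d u v hu hv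
    obtain ⟨w1, hcx, hw1⟩ := mul3_some hu
    obtain ⟨w2, hcy⟩ := Option.isSome_iff_exists.mp
      (mul_isSome_right hxy (isSome_of_eq_some hcx))
    have hty : S.ty w1 = S.ty w2 := by
      rw [S.ty_mul hcx, S.ty_mul hcy, hxy]
    obtain ⟨m, hm⟩ := Option.isSome_iff_exists.mp
      (mul_isSome_left hty (isSome_of_eq_some hw1))
    exact (h1.1 c d u m hu (mul3_mk hcy hm)).trans (h2.1 c d m v (mul3_mk hcy hm) hv)
  · intro c u v hu hv
    obtain ⟨m, hm⟩ := Option.isSome_iff_exists.mp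
      (mul_isSome_right hxy (isSome_of_eq_some hu))
    exact (h1.2.1 c u m hu hm).trans (h2.2.1 c m v hm hv)
  · intro d u v hu hv
    obtain ⟨m, hm⟩ := Option.isSome_iff_exists.mp
      (mul_isSome_left hxy (isSome_of_eq_some hu))
    exact (h1.2.2 d u m hu hm).trans (h2.2.2 d m v hm hv)

/-- Transitivity of the syntactic congruence when the last two elements have
the same type. -/
lemma synCong_trans_right {x y z : S.A} (hyz : S.ty y = S.ty z)
    (h1 : S.synCong C x y) (h2 : S.synCong C y z) : S.synCong C x z :=
  synCong_symm (synCong_trans_left hyz.symm (synCong_symm h2) (synCong_symm h1))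

/-- The syntactic congruence is compatible with multiplication on the right. -/
lemma synCong_mul_right {x x' y z z' : S.A} (h : S.synCong C x x')
    (hz : S.mul x y = some z) (hz' : S.mul x' y = some z') : S.synCong C z z' := by
  refine ⟨?_, ?_, ?_⟩
  · intro c d u v hu hv
    obtain ⟨u1, hcz, hud⟩ := mul3_some hu
    obtain ⟨v1, hcz', hvd⟩ := mul3_some hv
    have hassoc := S.mul_assoc c x y
    rw [hz] at hassoc
    simp only [Option.bind_some] at hassoc
    rw [hcz] at hassoc
    have hex : ∃ a1, S.mul c x = some a1 ∧ S.mul a1 y = some u1 := by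
      cases hcx : S.mul c x with
      | none => rw [hcx] at hassoc; simp at hassoc
      | some a1 =>
        rw [hcx] at hassoc
        simp only [Option.bind_some] at hassoc
        exact ⟨a1, rfl, hassoc⟩
    obtain ⟨a1, hca, ha1y⟩ := hex
    have hyd : (S.mul y d).isSome := by
      refine (S.mul_defined y d).2 ?_
      have h1 := compat_of_mul hud
      unfold STy.compat at h1 ⊢
      rw [S.ty_mul ha1y, STy.tgt_comp (compat_of_mul ha1y)] at h1
      exact h1
    obtain ⟨e, hyde⟩ := Option.isSome_iff_exists.mp hyd
    have hassoc2 := S.mul_assoc a1 y d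
    rw [ha1y, hyde] at hassoc2
    simp only [Option.bind_some] at hassoc2
    rw [hud] at hassoc2
    have hassoc' := S.mul_assoc c x' y
    rw [hz'] at hassoc'
    simp only [Option.bind_some] at hassoc'
    rw [hcz'] at hassoc'
    have hex' : ∃ a1', S.mul c x' = some a1' ∧ S.mul a1' y = some v1 := by
      cases hcx' : S.mul c x' with
      | none => rw [hcx'] at hassoc'; simp at hassoc'
      | some a1' =>
        rw [hcx'] at hassoc'
        simp only [Option.bind_some] at hassoc'
        exact ⟨a1', rfl, hassoc'⟩
    obtain ⟨a1', hca', ha1y'⟩ := hex'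
    have hassoc2' := S.mul_assoc a1' y d
    rw [ha1y', hyde] at hassoc2'
    simp only [Option.bind_some] at hassoc2'
    rw [hvd] at hassoc2'
    exact h.1 c e u v (mul3_mk hca hassoc2.symm) (mul3_mk hca' hassoc2'.symm)
  · intro c u v hu hv
    have hassoc := S.mul_assoc c x y
    rw [hz] at hassoc
    simp only [Option.bind_some] at hassoc
    rw [hu] at hassoc
    have hassoc' := S.mul_assoc c x' y
    rw [hz'] at hassoc'
    simp only [Option.bind_some] at hassoc'
    rw [hv] at hassoc'
    exact h.1 c y u v hassoc hassoc'
  · intro d u v hu hv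
    have hassoc := S.mul_assoc x y d
    rw [hz] at hassoc
    simp only [Option.bind_some] at hassoc
    rw [hu] at hassoc
    have hex : ∃ e, S.mul y d = some e ∧ S.mul x e = some u := by
      cases hyd : S.mul y d with
      | none => rw [hyd] at hassoc; simp at hassoc
      | some e =>
        rw [hyd] at hassoc
        simp only [Option.bind_some] at hassoc
        exact ⟨e, rfl, hassoc.symm⟩
    obtain ⟨e, hyde, hxe⟩ := hex
    have hassoc' := S.mul_assoc x' y d
    rw [hz', hyde] at hassoc'
    simp only [Option.bind_some] at hassoc'
    rw [hv] at hassoc'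
    exact h.2.2 e u v hxe hassoc'.symm

/-- The syntactic congruence is compatible with multiplication on the left. -/
lemma synCong_mul_left {x y y' z z' : S.A} (h : S.synCong C y y')
    (hz : S.mul x y = some z) (hz' : S.mul x y' = some z') : S.synCong C z z' := by
  refine ⟨?_, ?_, ?_⟩
  · intro c d u v hu hv
    obtain ⟨u1, hcz, hud⟩ := mul3_some hu
    obtain ⟨v1, hcz', hvd⟩ := mul3_some hv
    have hassoc := S.mul_assoc c x y
    rw [hz] at hassoc
    simp only [Option.bind_some] at hassoc
    rw [hcz] at hassoc
    have hex : ∃ a1, S.mul c x = some a1 ∧ S.mul a1 y = some u1 := by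
      cases hcx : S.mul c x with
      | none => rw [hcx] at hassoc; simp at hassoc
      | some a1 =>
        rw [hcx] at hassoc
        simp only [Option.bind_some] at hassoc
        exact ⟨a1, rfl, hassoc⟩
    obtain ⟨a1, hca, ha1y⟩ := hex
    have hassoc' := S.mul_assoc c x y'
    rw [hz'] at hassoc'
    simp only [Option.bind_some] at hassoc'
    rw [hcz', hca] at hassoc'
    simp only [Option.bind_some] at hassoc'
    exact h.1 a1 d u v (mul3_mk ha1y hud) (mul3_mk hassoc' hvd)
  · intro c u v hu hv
    have hassoc := S.mul_assoc c x y
    rw [hz] at hassoc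
    simp only [Option.bind_some] at hassoc
    rw [hu] at hassoc
    have hex : ∃ a1, S.mul c x = some a1 ∧ S.mul a1 y = some u := by
      cases hcx : S.mul c x with
      | none => rw [hcx] at hassoc; simp at hassoc
      | some a1 =>
        rw [hcx] at hassoc
        simp only [Option.bind_some] at hassoc
        exact ⟨a1, rfl, hassoc⟩
    obtain ⟨a1, hca, ha1y⟩ := hex
    have hassoc' := S.mul_assoc c x y'
    rw [hz'] at hassoc'
    simp only [Option.bind_some] at hassoc'
    rw [hv, hca] at hassoc'
    simp only [Option.bind_some] at hassoc'
    exact h.2.1 a1 u v ha1y hassoc'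
  · intro d u v hu hv
    have h1 : S.mul3 x y d = some u := by
      unfold mul3; rw [hz]; exact hu
    have h2 : S.mul3 x y' d = some v := by
      unfold mul3; rw [hz']; exact hv
    exact h.1 x d u v h1 h2

/-- The relation identifying syntactically congruent elements of the same type. -/
def qrel (S : SyncAlg) (C : Set S.A) (x y : S.A) : Prop :=
  S.synCong C x y ∧ S.ty x = S.ty y

lemma qrel_equiv (S : SyncAlg) (C : Set S.A) : Equivalence (qrel S C) where
  refl a := ⟨synCong_refl a, rfl⟩
  symm h := ⟨synCong_symm h.1, h.2.symm⟩
  trans h1 h2 := ⟨synCong_trans_left h1.2 h1.1 h2.1, h1.2.trans h2.2⟩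

/-- The setoid induced by `qrel`. -/
def qsetoid (S : SyncAlg) (C : Set S.A) : Setoid S.A :=
  ⟨qrel S C, qrel_equiv S C⟩

lemma synCong_congr {a a' b b' : S.A} (ha : qrel S C a a') (hb : qrel S C b b') :
    S.synCong C a b ↔ S.synCong C a' b' := by
  constructor
  · intro h
    exact synCong_trans_right hb.2
      (synCong_trans_left ha.2.symm (synCong_symm ha.1) h) hb.1
  · intro h
    exact synCong_trans_right hb.2.symm
      (synCong_trans_left ha.2 ha.1 h) (synCong_symm hb.1)

lemma qrel_mul {a a' b b' : S.A} (ha : qrel S C a a') (hb : qrel S C b b') :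
    (S.mul a b).map (Quotient.mk (qsetoid S C)) =
      (S.mul a' b').map (Quotient.mk (qsetoid S C)) := by
  cases hab : S.mul a b with
  | none =>
    have : ¬ (S.mul a' b').isSome := by
      rw [S.mul_defined, ← ha.2, ← hb.2, ← S.mul_defined, hab]
      simp
    rw [Option.not_isSome_iff_eq_none] at this
    rw [this]
  | some z =>
    have hab' : (S.mul a' b).isSome :=
      mul_isSome_left ha.2 (isSome_of_eq_some hab)
    obtain ⟨w, hw⟩ := Option.isSome_iff_exists.mp hab'
    have hab'' : (S.mul a' b').isSome :=
      mul_isSome_right hb.2 hab'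
    obtain ⟨z', hz'⟩ := Option.isSome_iff_exists.mp hab''
    rw [hz']
    simp only [Option.map_some]
    refine congrArg some (Quotient.sound ?_)
    have h1 : S.synCong C z w := synCong_mul_right ha.1 hab hw
    have h2 : S.synCong C w z' := synCong_mul_left hb.1 hw hz'
    have hty1 : S.ty z = S.ty w := by
      rw [S.ty_mul hab, S.ty_mul hw, ha.2]
    have hty2 : S.ty z = S.ty z' := by
      rw [S.ty_mul hab, S.ty_mul hz', ha.2, hb.2]
    exact ⟨synCong_trans_left hty1 h1 h2, hty2⟩

variable (S C) in
/-- The quotient of a synchronous algebra by the syntactic congruence of a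
closed subset `C`. -/
def quotAlg (hC : S.Closed C) : SyncAlg where
  A := Quotient (qsetoid S C)
  ty := Quotient.lift S.ty fun _ _ h => h.2
  dep := Quotient.lift₂ (S.synCong C) fun _ _ _ _ ha hb => propext (synCong_congr ha hb)
  mul := Quotient.lift₂ (fun a b => (S.mul a b).map (Quotient.mk (qsetoid S C)))
    fun _ _ _ _ ha hb => qrel_mul ha hb
  dep_refl := fun x => Quotient.inductionOn x fun a => synCong_refl a
  dep_symm := fun {x y} h => Quotient.inductionOn₂ x y (fun _ _ h => synCong_symm h) h
  dep_eq := fun {x y} h hty => by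
    induction x using Quotient.ind
    induction y using Quotient.ind
    exact Quotient.sound ⟨h, hty⟩
  mul_defined := fun x y => by
    induction x using Quotient.ind with | _ a =>
    induction y using Quotient.ind with | _ b =>
    show ((S.mul a b).map _).isSome ↔ _
    rw [Option.isSome_map]
    exact S.mul_defined a b
  ty_mul := fun {x y z} h => by
    induction x using Quotient.ind with | _ a =>
    induction y using Quotient.ind with | _ b =>
    induction z using Quotient.ind with | _ c =>
    replace h : (S.mul a b).map (Quotient.mk (qsetoid S C)) = some ⟦c⟧ := h
    cases hab : S.mul a b with
    | none => rw [hab] at h; simp at h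
    | some w =>
      rw [hab] at h
      simp only [Option.map_some, Option.some.injEq] at h
      have hw : qrel S C w c := Quotient.exact h
      show S.ty c = (S.ty a).comp (S.ty b)
      rw [← hw.2]
      exact S.ty_mul hab
  mul_assoc := fun x y z => by
    induction x using Quotient.ind with | _ a =>
    induction y using Quotient.ind with | _ b =>
    induction z using Quotient.ind with | _ c =>
    show ((S.mul a b).map _).bind _ = ((S.mul b c).map _).bind _
    have h := S.mul_assoc a b c
    cases hab : S.mul a b with
    | none =>
      rw [hab] at h
      simp only [Option.bind_none] at h
      cases hbc : S.mul b c with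
      | none => simp
      | some w =>
        rw [hbc] at h
        simp only [Option.bind_some] at h
        simp [← h]
    | some w =>
      rw [hab] at h
      simp only [Option.bind_some] at h
      cases hbc : S.mul b c with
      | none =>
        rw [hbc] at h
        simp only [Option.bind_none] at h
        simp [h]
      | some w' =>
        rw [hbc] at h
        simp only [Option.bind_some] at h
        simp only [Option.map_some, Option.bind_some]
        show (S.mul w c).map _ = (S.mul a w').map _
        rw [h]
  dep_mul_left := fun {x x' y z z'} h h1 h2 => by
    induction x using Quotient.ind with | _ a =>
    induction x' using Quotient.ind with | _ a' =>
    induction y using Quotient.ind with | _ b =>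
    induction z using Quotient.ind with | _ c =>
    induction z' using Quotient.ind with | _ c' =>
    replace h : S.synCong C a a' := h
    replace h1 : (S.mul a b).map (Quotient.mk (qsetoid S C)) = some ⟦c⟧ := h1
    replace h2 : (S.mul a' b).map (Quotient.mk (qsetoid S C)) = some ⟦c'⟧ := h2
    show S.synCong C c c'
    cases hab : S.mul a b with
    | none => rw [hab] at h1; simp at h1
    | some w =>
      cases hab' : S.mul a' b with
      | none => rw [hab'] at h2; simp at h2
      | some w' =>
        rw [hab] at h1; rw [hab'] at h2
        simp only [Option.map_some, Option.some.injEq] at h1 h2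
        have hw : qrel S C w c := Quotient.exact h1
        have hw' : qrel S C w' c' := Quotient.exact h2
        have hww' : S.synCong C w w' := synCong_mul_right h hab hab'
        exact synCong_trans_right hw'.2
          (synCong_trans_left hw.2.symm (synCong_symm hw.1) hww') hw'.1
  dep_mul_right := fun {x x' y z z'} h h1 h2 => by
    induction x using Quotient.ind with | _ a =>
    induction x' using Quotient.ind with | _ a' =>
    induction y using Quotient.ind with | _ b =>
    induction z using Quotient.ind with | _ c =>
    induction z' using Quotient.ind with | _ c' =>
    replace h : S.synCong C a a' := h
    replace h1 : (S.mul b a).map (Quotient.mk (qsetoid S C)) = some ⟦c⟧ := h1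
    replace h2 : (S.mul b a').map (Quotient.mk (qsetoid S C)) = some ⟦c'⟧ := h2
    show S.synCong C c c'
    cases hab : S.mul b a with
    | none => rw [hab] at h1; simp at h1
    | some w =>
      cases hab' : S.mul b a' with
      | none => rw [hab'] at h2; simp at h2
      | some w' =>
        rw [hab] at h1; rw [hab'] at h2
        simp only [Option.map_some, Option.some.injEq] at h1 h2
        have hw : qrel S C w c := Quotient.exact h1
        have hw' : qrel S C w' c' := Quotient.exact h2
        have hww' : S.synCong C w w' := synCong_mul_left h hab hab'
        exact synCong_trans_right hw'.2
          (synCong_trans_left hw.2.symm (synCong_symm hw.1) hww') hw'.1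
  unit := fun τ => Quotient.mk (qsetoid S C) (S.unit τ)
  ty_unit := fun τ => S.ty_unit τ
  unit_mul := fun {τ x z} h => by
    induction x using Quotient.ind with | _ a =>
    induction z using Quotient.ind with | _ c =>
    replace h : (S.mul (S.unit τ) a).map (Quotient.mk (qsetoid S C)) = some ⟦c⟧ := h
    show S.synCong C c a
    cases hu : S.mul (S.unit τ) a with
    | none => rw [hu] at h; simp at h
    | some w =>
      rw [hu] at h
      simp only [Option.map_some, Option.some.injEq] at h
      have hw : qrel S C w c := Quotient.exact h
      have : S.synCong C w a := synCong_of_dep hC (S.unit_mul hu)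
      exact synCong_trans_left hw.2.symm (synCong_symm hw.1) this
  mul_unit := fun {τ x z} h => by
    induction x using Quotient.ind with | _ a =>
    induction z using Quotient.ind with | _ c =>
    replace h : (S.mul a (S.unit τ)).map (Quotient.mk (qsetoid S C)) = some ⟦c⟧ := h
    show S.synCong C c a
    cases hu : S.mul a (S.unit τ) with
    | none => rw [hu] at h; simp at h
    | some w =>
      rw [hu] at h
      simp only [Option.map_some, Option.some.injEq] at h
      have hw : qrel S C w c := Quotient.exact h
      have : S.synCong C w a := synCong_of_dep hC (S.mul_unit hu)
      exact synCong_trans_left hw.2.symm (synCong_symm hw.1) this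
  unit_lllb := by
    show (S.mul (S.unit .ll) (S.unit .lb)).map (Quotient.mk (qsetoid S C)) = _
    rw [S.unit_lllb]; rfl
  unit_llbl := by
    show (S.mul (S.unit .ll) (S.unit .bl)).map (Quotient.mk (qsetoid S C)) = _
    rw [S.unit_llbl]; rfl

end SyncAlg

/-- In the syntactic synchronous algebra of a relation `R`
(characterized by its universal property), the syntactic congruence of the
accepting set coincides with the dependency relation. -/
theorem synCong_eq_dep_in_syntactic_algebra (α : Type) (R : Set (List α × List α))
    (A : SyncAlg) (η : SyncHom (freeSync α) A)
    (hs : Function.Surjective η.toFun)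
    (Acc : Set A.A) (hrec : RecognizesRel A η Acc R)
    (huniv : ∀ (B : SyncAlg) (φ : SyncHom (freeSync α) B),
      Function.Surjective φ.toFun → (∃ Acc' : Set B.A, RecognizesRel B φ Acc' R) →
      ∃ ψ : SyncHom B A,
        Function.Surjective ψ.toFun ∧ ∀ u, ψ.toFun (φ.toFun u) = η.toFun u) :
    ∀ x y : A.A, A.synCong Acc x y ↔ A.dep x y := by
  have hC : A.Closed Acc := hrec.1
  let B := SyncAlg.quotAlg A Acc hC
  let mk : A.A → B.A := Quotient.mk (SyncAlg.qsetoid A Acc)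
  let φ : SyncHom (freeSync α) B :=
    { toFun := fun u => mk (η.toFun u)
      map_ty := fun u => η.map_ty u
      map_unit := fun τ => by
        show mk (η.toFun _) = mk (A.unit τ)
        rw [η.map_unit]
      map_mul := fun {x y z} h => by
        show (A.mul (η.toFun x) (η.toFun y)).map _ = _
        rw [η.map_mul h]
        rfl
      map_dep := fun {x y} h => SyncAlg.synCong_of_dep hC (η.map_dep h) }
  have hφs : Function.Surjective φ.toFun := by
    intro b
    induction b using Quotient.ind with | _ a =>
    obtain ⟨u, hu⟩ := hs a
    exact ⟨u, congrArg mk hu⟩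
  let Acc' : Set B.A := {b | ∃ a ∈ Acc, mk a = b}
  have hmem : ∀ a : A.A, mk a ∈ Acc' ↔ a ∈ Acc := by
    intro a
    constructor
    · rintro ⟨a', ha', hqe⟩
      have hq : SyncAlg.qrel A Acc a' a := Quotient.exact hqe
      exact (SyncAlg.mem_iff_of_synCong hC hq.1).mp ha'
    · intro h
      exact ⟨a, h, rfl⟩
  have hrec' : RecognizesRel B φ Acc' R := by
    constructor
    · intro x y h
      induction x using Quotient.ind with | _ a =>
      induction y using Quotient.ind with | _ b =>
      replace h : A.synCong Acc a b := h
      rw [show (⟦a⟧ : B.A) = mk a from rfl, show (⟦b⟧ : B.A) = mk b from rfl,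
        hmem, hmem]
      exact SyncAlg.mem_iff_of_synCong hC h
    · ext u
      have h2 : u ∈ projS R ↔ η.toFun u ∈ Acc := by rw [hrec.2]; rfl
      show u ∈ projS R ↔ φ.toFun u ∈ Acc'
      rw [h2]
      exact (hmem (η.toFun u)).symm
  obtain ⟨ψ, hψs, hψ⟩ := huniv B φ hφs ⟨Acc', hrec'⟩
  have hψmk : ∀ a : A.A, ψ.toFun (mk a) = a := by
    intro a
    obtain ⟨u, hu⟩ := hs a
    rw [← hu]
    exact hψ u
  intro x y
  constructor
  · intro h
    have hd : B.dep (mk x) (mk y) := h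
    have hdd := ψ.map_dep hd
    rwa [hψmk, hψmk] at hdd
  · exact SyncAlg.synCong_of_dep hC
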